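/- The element C := XYK is central in the quotient algebra A/(φ), where φ = EY − qYE. -/
import Mathlib


/-- Generators of the quantum spatial ageing algebra. -/
inductive QGen : Type
  | E | K | Kinv | X | Y

open FreeAlgebra in
/-- Defining relations of the quantum spatial ageing algebra
`EK = q⁻²KE`, `XK = q⁻¹KX`, `YK = qKY`, `EX = qXE`, `EY = X + q⁻¹YE`, `qYX = XY`,
together with `K K⁻¹ = K⁻¹ K = 1`. -/
inductive QSARel (k : Type) [Field k] (q : k) :
    FreeAlgebra k QGen → FreeAlgebra k QGen → Prop
  | KKinv : QSARel k q (ι k QGen.K * ι k QGen.Kinv) 1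
  | KinvK : QSARel k q (ι k QGen.Kinv * ι k QGen.K) 1
  | EK : QSARel k q (ι k QGen.E * ι k QGen.K) ((q ^ 2)⁻¹ • (ι k QGen.K * ι k QGen.E))
  | XK : QSARel k q (ι k QGen.X * ι k QGen.K) (q⁻¹ • (ι k QGen.K * ι k QGen.X))
  | YK : QSARel k q (ι k QGen.Y * ι k QGen.K) (q • (ι k QGen.K * ι k QGen.Y))
  | EX : QSARel k q (ι k QGen.E * ι k QGen.X) (q • (ι k QGen.X * ι k QGen.E))
  | EY : QSARel k q (ι k QGen.E * ι k QGen.Y)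
      (ι k QGen.X + q⁻¹ • (ι k QGen.Y * ι k QGen.E))
  | YX : QSARel k q (q • (ι k QGen.Y * ι k QGen.X)) (ι k QGen.X * ι k QGen.Y)

/-- The quantum spatial ageing algebra `𝒜 = 𝕂_q[X,Y] ⋊ U_q^{≥0}(sl₂)`. -/
noncomputable abbrev QSA (k : Type) [Field k] (q : k) : Type := RingQuot (QSARel k q)

noncomputable def Egen (k : Type) [Field k] (q : k) : QSA k q :=
  RingQuot.mkAlgHom k (QSARel k q) (FreeAlgebra.ι k QGen.E)
noncomputable def Kgen (k : Type) [Field k] (q : k) : QSA k q :=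
  RingQuot.mkAlgHom k (QSARel k q) (FreeAlgebra.ι k QGen.K)
noncomputable def Kinvgen (k : Type) [Field k] (q : k) : QSA k q :=
  RingQuot.mkAlgHom k (QSARel k q) (FreeAlgebra.ι k QGen.Kinv)
noncomputable def Xgen (k : Type) [Field k] (q : k) : QSA k q :=
  RingQuot.mkAlgHom k (QSARel k q) (FreeAlgebra.ι k QGen.X)
noncomputable def Ygen (k : Type) [Field k] (q : k) : QSA k q :=
  RingQuot.mkAlgHom k (QSARel k q) (FreeAlgebra.ι k QGen.Y)

/-- The normal element `φ = EY - qYE`. -/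
noncomputable def phi (k : Type) [Field k] (q : k) : QSA k q :=
  Egen k q * Ygen k q - q • (Ygen k q * Egen k q)

section Aux
variable (k : Type) [Field k] (q : k)

lemma rel_eq {x y : FreeAlgebra k QGen} (h : QSARel k q x y) :
    RingQuot.mkAlgHom k (QSARel k q) x = RingQuot.mkAlgHom k (QSARel k q) y :=
  RingQuot.mkAlgHom_rel k h

lemma rKK' : Kgen k q * Kinvgen k q = 1 := by
  simpa [Kgen, Kinvgen, map_mul] using rel_eq k q (QSARel.KKinv)

lemma rK'K : Kinvgen k q * Kgen k q = 1 := by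
  simpa [Kgen, Kinvgen, map_mul] using rel_eq k q (QSARel.KinvK)

lemma rEK : Egen k q * Kgen k q = (q ^ 2)⁻¹ • (Kgen k q * Egen k q) := by
  simpa [Egen, Kgen, map_mul, map_smul] using rel_eq k q (QSARel.EK)

lemma rXK : Xgen k q * Kgen k q = q⁻¹ • (Kgen k q * Xgen k q) := by
  simpa [Xgen, Kgen, map_mul, map_smul] using rel_eq k q (QSARel.XK)

lemma rYK : Ygen k q * Kgen k q = q • (Kgen k q * Ygen k q) := by
  simpa [Ygen, Kgen, map_mul, map_smul] using rel_eq k q (QSARel.YK)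

lemma rEX : Egen k q * Xgen k q = q • (Xgen k q * Egen k q) := by
  simpa [Egen, Xgen, map_mul, map_smul] using rel_eq k q (QSARel.EX)

lemma rEY : Egen k q * Ygen k q = Xgen k q + q⁻¹ • (Ygen k q * Egen k q) := by
  simpa [Egen, Xgen, Ygen, map_mul, map_add, map_smul] using rel_eq k q (QSARel.EY)

lemma rYX : q • (Ygen k q * Xgen k q) = Xgen k q * Ygen k q := by
  simpa [Xgen, Ygen, map_mul, map_smul] using rel_eq k q (QSARel.YX)

end Aux

section Aux2
variable (k : Type) [Field k] (q : k) (hq : q ≠ 0)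
include hq

lemma hKX : Kgen k q * Xgen k q = q • (Xgen k q * Kgen k q) := by
  rw [rXK, smul_smul, mul_inv_cancel₀ hq, one_smul]

lemma hKY : Kgen k q * Ygen k q = q⁻¹ • (Ygen k q * Kgen k q) := by
  rw [rYK, smul_smul, inv_mul_cancel₀ hq, one_smul]

lemma hKE : Kgen k q * Egen k q = (q ^ 2) • (Egen k q * Kgen k q) := by
  rw [rEK, smul_smul, mul_inv_cancel₀ (pow_ne_zero 2 hq), one_smul]

lemma rXK' : Xgen k q * Kinvgen k q = q • (Kinvgen k q * Xgen k q) := by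
  have : Xgen k q * Kinvgen k q
      = Kinvgen k q * ((Kgen k q * Xgen k q) * Kinvgen k q) := by
    rw [← mul_assoc, ← mul_assoc, rK'K, one_mul]
  rw [this, hKX k q hq, smul_mul_assoc, mul_smul_comm, mul_assoc, rKK', mul_one]

lemma rYK' : Ygen k q * Kinvgen k q = q⁻¹ • (Kinvgen k q * Ygen k q) := by
  have : Ygen k q * Kinvgen k q
      = Kinvgen k q * ((Kgen k q * Ygen k q) * Kinvgen k q) := by
    rw [← mul_assoc, ← mul_assoc, rK'K, one_mul]
  rw [this, hKY k q hq, smul_mul_assoc, mul_smul_comm, mul_assoc, rKK', mul_one]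

lemma commK : (Xgen k q * Ygen k q * Kgen k q) * Kgen k q
    = Kgen k q * (Xgen k q * Ygen k q * Kgen k q) := by
  have e1 : ∀ c, Kgen k q * (Xgen k q * c) = q • (Xgen k q * (Kgen k q * c)) := by
    intro c; rw [← mul_assoc, hKX k q hq, smul_mul_assoc, mul_assoc]
  have e2 : ∀ c, Kgen k q * (Ygen k q * c) = q⁻¹ • (Ygen k q * (Kgen k q * c)) := by
    intro c; rw [← mul_assoc, hKY k q hq, smul_mul_assoc, mul_assoc]
  simp only [mul_assoc, e1, e2, smul_smul, mul_smul_comm, smul_mul_assoc]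
  match_scalars <;> field_simp

lemma commKinv : (Xgen k q * Ygen k q * Kgen k q) * Kinvgen k q
    = Kinvgen k q * (Xgen k q * Ygen k q * Kgen k q) := by
  have e1 : ∀ c, Kinvgen k q * (Xgen k q * c)
      = q⁻¹ • (Xgen k q * (Kinvgen k q * c)) := by
    intro c
    have h : Kinvgen k q * Xgen k q = q⁻¹ • (Xgen k q * Kinvgen k q) := by
      rw [rXK' k q hq, smul_smul, inv_mul_cancel₀ hq, one_smul]
    rw [← mul_assoc, h, smul_mul_assoc, mul_assoc]
  have e2 : ∀ c, Kinvgen k q * (Ygen k q * c)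
      = q • (Ygen k q * (Kinvgen k q * c)) := by
    intro c
    have h : Kinvgen k q * Ygen k q = q • (Ygen k q * Kinvgen k q) := by
      rw [rYK' k q hq, smul_smul, mul_inv_cancel₀ hq, one_smul]
    rw [← mul_assoc, h, smul_mul_assoc, mul_assoc]
  simp only [mul_assoc, e1, e2, rKK', rK'K, mul_one, smul_smul, mul_smul_comm,
    smul_mul_assoc]
  match_scalars
  field_simp

lemma commX : (Xgen k q * Ygen k q * Kgen k q) * Xgen k q
    = Xgen k q * (Xgen k q * Ygen k q * Kgen k q) := by
  have e1 : ∀ c, Kgen k q * (Xgen k q * c) = q • (Xgen k q * (Kgen k q * c)) := by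
    intro c; rw [← mul_assoc, hKX k q hq, smul_mul_assoc, mul_assoc]
  have e2 : ∀ c, Ygen k q * (Xgen k q * c) = q⁻¹ • (Xgen k q * (Ygen k q * c)) := by
    intro c
    have h : Ygen k q * Xgen k q = q⁻¹ • (Xgen k q * Ygen k q) := by
      rw [← rYX, smul_smul, inv_mul_cancel₀ hq, one_smul]
    rw [← mul_assoc, h, smul_mul_assoc, mul_assoc]
  have h2 : Ygen k q * Xgen k q = q⁻¹ • (Xgen k q * Ygen k q) := by
    rw [← rYX, smul_smul, inv_mul_cancel₀ hq, one_smul]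
  simp only [mul_assoc, e1, e2, hKX k q hq, h2, smul_smul, mul_smul_comm,
    smul_mul_assoc]
  match_scalars
  field_simp

lemma commY : (Xgen k q * Ygen k q * Kgen k q) * Ygen k q
    = Ygen k q * (Xgen k q * Ygen k q * Kgen k q) := by
  have e1 : ∀ c, Kgen k q * (Ygen k q * c) = q⁻¹ • (Ygen k q * (Kgen k q * c)) := by
    intro c; rw [← mul_assoc, hKY k q hq, smul_mul_assoc, mul_assoc]
  have e2 : ∀ c, Ygen k q * (Xgen k q * c) = q⁻¹ • (Xgen k q * (Ygen k q * c)) := by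
    intro c
    have h : Ygen k q * Xgen k q = q⁻¹ • (Xgen k q * Ygen k q) := by
      rw [← rYX, smul_smul, inv_mul_cancel₀ hq, one_smul]
    rw [← mul_assoc, h, smul_mul_assoc, mul_assoc]
  simp only [mul_assoc, e1, e2, hKY k q hq, smul_smul, mul_smul_comm,
    smul_mul_assoc]

lemma commE : (Xgen k q * Ygen k q * Kgen k q) * Egen k q
      - Egen k q * (Xgen k q * Ygen k q * Kgen k q)
    = (-q) • (Xgen k q * phi k q * Kgen k q) := by
  have eEX : ∀ c, Egen k q * (Xgen k q * c) = q • (Xgen k q * (Egen k q * c)) := by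
    intro c; rw [← mul_assoc, rEX, smul_mul_assoc, mul_assoc]
  have eEY : ∀ c, Egen k q * (Ygen k q * c)
      = Xgen k q * c + q⁻¹ • (Ygen k q * (Egen k q * c)) := by
    intro c; rw [← mul_assoc, rEY, add_mul, smul_mul_assoc, mul_assoc]
  have eEK : ∀ c, Egen k q * (Kgen k q * c)
      = (q ^ 2)⁻¹ • (Kgen k q * (Egen k q * c)) := by
    intro c; rw [← mul_assoc, rEK, smul_mul_assoc, mul_assoc]
  simp only [phi, mul_sub, sub_mul, mul_add, add_mul, mul_assoc, eEX, eEY, eEK,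
    rEK, rEX, rEY, smul_smul, mul_smul_comm, smul_mul_assoc, smul_add, smul_sub]
  match_scalars <;> (field_simp; try ring)

end Aux2

/-- `C = XYK` is central in `𝒜/(φ)`. -/
theorem stmt10 (k : Type) [Field k] (q : k) (hq : q ≠ 0)
    (hq' : ∀ n : ℕ, n ≠ 0 → q ^ n ≠ 1) :
    ∀ a : QSA k q,
      (Xgen k q * Ygen k q * Kgen k q) * a - a * (Xgen k q * Ygen k q * Kgen k q) ∈
        TwoSidedIdeal.span {phi k q} := by
  intro a
  set I := TwoSidedIdeal.span {phi k q} with hI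
  set C := Xgen k q * Ygen k q * Kgen k q with hC
  obtain ⟨x, rfl⟩ := RingQuot.mkAlgHom_surjective k (QSARel k q) a
  induction x using FreeAlgebra.induction with
  | grade0 r =>
      rw [AlgHom.commutes, Algebra.commutes r C, sub_self]
      exact I.zero_mem
  | grade1 g =>
      cases g with
      | E =>
          have h1 : C * Egen k q - Egen k q * C
              = (-q) • (Xgen k q * phi k q * Kgen k q) := commE k q hq
          have h2 : phi k q ∈ I := TwoSidedIdeal.subset_span rfl
          have h3 : Xgen k q * phi k q * Kgen k q ∈ I :=
            I.mul_mem_right _ _ (I.mul_mem_left _ _ h2)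
          have h4 : (-q) • (Xgen k q * phi k q * Kgen k q) ∈ I := by
            rw [Algebra.smul_def]
            exact I.mul_mem_left _ _ h3
          exact h1 ▸ h4
      | K =>
          show C * Kgen k q - Kgen k q * C ∈ I
          rw [show C * Kgen k q - Kgen k q * C = 0 from
            sub_eq_zero.mpr (commK k q hq)]; exact I.zero_mem
      | Kinv =>
          show C * Kinvgen k q - Kinvgen k q * C ∈ I
          rw [show C * Kinvgen k q - Kinvgen k q * C = 0 from
            sub_eq_zero.mpr (commKinv k q hq)]; exact I.zero_mem
      | X =>
          show C * Xgen k q - Xgen k q * C ∈ I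
          rw [show C * Xgen k q - Xgen k q * C = 0 from
            sub_eq_zero.mpr (commX k q hq)]; exact I.zero_mem
      | Y =>
          show C * Ygen k q - Ygen k q * C ∈ I
          rw [show C * Ygen k q - Ygen k q * C = 0 from
            sub_eq_zero.mpr (commY k q hq)]; exact I.zero_mem
  | mul a b ha hb =>
      rw [map_mul]
      set A := RingQuot.mkAlgHom k (QSARel k q) a
      set B := RingQuot.mkAlgHom k (QSARel k q) b
      have key : C * (A * B) - (A * B) * C
          = (C * A - A * C) * B + A * (C * B - B * C) := by
        simp only [sub_mul, mul_sub, mul_assoc]; abel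
      rw [key]
      exact I.add_mem (I.mul_mem_right _ _ ha) (I.mul_mem_left _ _ hb)
  | add a b ha hb =>
      rw [map_add]
      set A := RingQuot.mkAlgHom k (QSARel k q) a
      set B := RingQuot.mkAlgHom k (QSARel k q) b
      have key : C * (A + B) - (A + B) * C
          = (C * A - A * C) + (C * B - B * C) := by
        simp only [mul_add, add_mul]; abel
      rw [key]
      exact I.add_mem ha hb
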